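/- First fundamental theorem of multiple almost-Riordan arrays, case j = 0: for u(t) = Σ_{k≥0} u_{ℓk} t^{ℓk} ∈ K[[t^ℓ]], the action of the multiple almost-Riordan array (b | g; f₁, …, f_ℓ) on u gives v(t) = u₀·b + (tg/f_ℓ)·(u(h) − u₀), where h = (f₁⋯f_ℓ)^{1/ℓ} and u₀ = u(0). -/

import Mathlib

open PowerSeries

/-- Composition `g ∘ f` of formal power series (meaningful when `f` has zero
constant term). -/
noncomputable def pcomp {K : Type*} [Field K] (g f : PowerSeries K) : PowerSeries K :=
  PowerSeries.mk fun n => ∑ k ∈ Finset.range (n + 1), coeff k g * coeff n (f ^ k)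

/-- `f/t`: the coefficient shift of a power series. -/
noncomputable def pdivX {K : Type*} [Field K] (f : PowerSeries K) : PowerSeries K :=
  PowerSeries.mk fun n => coeff (n + 1) f

/-- `g ∈ K[[t^ℓ]]`. -/
def InTl {K : Type*} [Field K] (ℓ : ℕ) (g : PowerSeries K) : Prop :=
  ∀ n : ℕ, ¬ ℓ ∣ n → coeff n g = 0

/-- A multiplier function: `f ∈ t·K[[t^ℓ]]` with `f'(0) ≠ 0`. -/
def IsMult {K : Type*} [Field K] (ℓ : ℕ) (f : PowerSeries K) : Prop :=
  constantCoeff f = 0 ∧ (∀ n : ℕ, n % ℓ ≠ 1 % ℓ → coeff n f = 0) ∧ coeff 1 f ≠ 0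

/-- Column generating functions `(b, tg, tgf₁, tgf₁f₂, …)` of the multiple
almost-Riordan array `(b | g; f₁, …, f_ℓ)`. -/
noncomputable def maCol {K : Type*} [Field K] (ℓ : ℕ) (b g : PowerSeries K)
    (f : ℕ → PowerSeries K) : ℕ → PowerSeries K
  | 0 => b
  | k + 1 => X * g * ∏ j ∈ Finset.range ℓ, f j ^ ((k + ℓ - 1 - j) / ℓ)

section Aux
variable {K : Type*} [Field K]

lemma X_mul_pdivX (f : PowerSeries K) (hf : constantCoeff f = 0) :
    X * pdivX f = f := by
  ext n
  cases n with
  | zero => simp [pdivX, hf]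
  | succ n => simp [pdivX, coeff_succ_X_mul]

lemma coeff_zero_of_X_pow_dvd {φ : PowerSeries K} {r n : ℕ}
    (hd : (X : PowerSeries K) ^ r ∣ φ) (hn : n < r) : coeff n φ = 0 :=
  PowerSeries.X_pow_dvd_iff.mp hd n hn

lemma sum_reindex (ℓ : ℕ) (hℓ : 1 ≤ ℓ) (u : PowerSeries K) (hu : InTl ℓ u)
    (w : ℕ → K) (j N : ℕ) (hjN : j ≤ N)
    (hw : ∀ m, 1 ≤ m → j < ℓ * m → w (ℓ * m) = 0) :
    ∑ k ∈ Finset.Ico 1 (j + 1), coeff k u * w k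
      = ∑ m ∈ Finset.Ico 1 (N + 1), coeff (ℓ * m) u * w (ℓ * m) := by
  have hp : ∀ k ∈ Finset.Ico 1 (j + 1), coeff k u * w k ≠ 0 → ℓ ∣ k := by
    intro k _ hk
    by_contra hnd
    exact hk (by rw [hu k hnd, zero_mul])
  have hq : ∀ m ∈ Finset.Ico 1 (N + 1),
      coeff (ℓ * m) u * w (ℓ * m) ≠ 0 → ℓ * m ≤ j := by
    intro m hm hne
    rw [Finset.mem_Ico] at hm
    by_contra hgt
    exact hne (by rw [hw m hm.1 (by omega), mul_zero])
  rw [← Finset.sum_filter_of_ne hp, ← Finset.sum_filter_of_ne hq]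
  apply Finset.sum_nbij' (fun k => k / ℓ) (fun m => ℓ * m)
  · intro k hk
    simp only [Finset.mem_filter, Finset.mem_Ico] at hk ⊢
    obtain ⟨⟨hk1, hk2⟩, d, rfl⟩ := hk
    have hd1 : 1 ≤ d := by
      rcases Nat.eq_zero_or_pos d with rfl | hp'
      · omega
      · exact hp'
    have hdk : d ≤ ℓ * d := Nat.le_mul_of_pos_left d (by omega)
    rw [Nat.mul_div_cancel_left d (by omega)]
    omega
  · intro m hm
    simp only [Finset.mem_filter, Finset.mem_Ico] at hm ⊢
    refine ⟨⟨Nat.one_le_iff_ne_zero.mpr ?_, by omega⟩, Dvd.intro m rfl⟩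
    have := Nat.mul_pos (show 0 < ℓ by omega) (show 0 < m by omega)
    omega
  · intro k hk
    simp only [Finset.mem_filter] at hk
    exact Nat.mul_div_cancel' hk.2
  · intro m _
    exact Nat.mul_div_cancel_left m (by omega)
  · intro k hk
    simp only [Finset.mem_filter] at hk
    rw [Nat.mul_div_cancel' hk.2]

lemma maCol_mul (ℓ : ℕ) (hℓ : 1 ≤ ℓ) (b g : PowerSeries K) (f : ℕ → PowerSeries K)
    (m : ℕ) (hm : 1 ≤ m) :
    maCol ℓ b g f (ℓ * m)
      = X * g * (∏ j ∈ Finset.range ℓ, f j) ^ (m - 1)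
          * ∏ j ∈ Finset.range (ℓ - 1), f j := by
  obtain ⟨L, rfl⟩ : ∃ L, ℓ = L + 1 := ⟨ℓ - 1, by omega⟩
  obtain ⟨m', rfl⟩ : ∃ m', m = m' + 1 := ⟨m - 1, by omega⟩
  have hP : 0 < (L + 1) * (m' + 1) := Nat.mul_pos (by omega) (by omega)
  obtain ⟨k, hk⟩ : ∃ k, (L + 1) * (m' + 1) = k + 1 := ⟨(L + 1) * (m' + 1) - 1, by omega⟩
  rw [hk]
  show X * g * ∏ j ∈ Finset.range (L + 1), f j ^ ((k + (L + 1) - 1 - j) / (L + 1)) = _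
  have hexp : ∀ j ∈ Finset.range (L + 1),
      f j ^ ((k + (L + 1) - 1 - j) / (L + 1))
        = f j ^ (if j = L then m' else m' + 1) := by
    intro j hj
    rw [Finset.mem_range] at hj
    congr 1
    have hk' : k = (L + 1) * m' + L := by
      have : (L + 1) * (m' + 1) = (L + 1) * m' + (L + 1) := by ring
      omega
    split_ifs with hje
    · rw [hje]
      apply Nat.div_eq_of_lt_le <;> [skip; skip] <;>
        · rw [hk']
          have h1 : m' * (L + 1) = (L + 1) * m' := by ring
          have h2 : (m' + 1) * (L + 1) = (L + 1) * m' + (L + 1) := by ring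
          omega
    · apply Nat.div_eq_of_lt_le
      · have h2 : (m' + 1) * (L + 1) = (L + 1) * m' + (L + 1) := by ring
        omega
      · have h3 : (m' + 1 + 1) * (L + 1) = (L + 1) * m' + 2 * (L + 1) := by ring
        omega
  rw [Finset.prod_congr rfl hexp, Finset.prod_range_succ, if_pos rfl]
  have : ∀ j ∈ Finset.range L, f j ^ (if j = L then m' else m' + 1) = f j ^ (m' + 1) := by
    intro j hj
    rw [Finset.mem_range] at hj
    rw [if_neg (by omega)]
  rw [Finset.prod_congr rfl this, Finset.prod_pow]
  simp only [Nat.add_sub_cancel, Nat.succ_sub_one]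
  rw [Finset.prod_range_succ, mul_pow, pow_succ]
  ring

lemma key_col (ℓ : ℕ) (hℓ : 1 ≤ ℓ) (b g : PowerSeries K) (f : ℕ → PowerSeries K)
    (h : PowerSeries K)
    (hf : ∀ j < ℓ, IsMult ℓ (f j))
    (hroot : h ^ ℓ = ∏ j ∈ Finset.range ℓ, f j)
    (m : ℕ) (hm : 1 ≤ m) :
    g * (pdivX (f (ℓ - 1)))⁻¹ * h ^ (ℓ * m) = maCol ℓ b g f (ℓ * m) := by
  have hfl := hf (ℓ - 1) (by omega)
  have hP0 : constantCoeff (pdivX (f (ℓ - 1))) ≠ 0 := by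
    simpa [pdivX, constantCoeff_mk] using hfl.2.2
  have hPinv : pdivX (f (ℓ - 1)) * (pdivX (f (ℓ - 1)))⁻¹ = 1 :=
    PowerSeries.mul_inv_cancel _ hP0
  rw [maCol_mul ℓ hℓ b g f m hm, pow_mul, hroot]
  have hF : ∏ j ∈ Finset.range ℓ, f j
      = (∏ j ∈ Finset.range (ℓ - 1), f j) * (X * pdivX (f (ℓ - 1))) := by
    rw [X_mul_pdivX _ hfl.1]
    obtain ⟨L, rfl⟩ : ∃ L, ℓ = L + 1 := ⟨ℓ - 1, by omega⟩
    simp [Finset.prod_range_succ]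
  obtain ⟨m', rfl⟩ : ∃ m', m = m' + 1 := ⟨m - 1, by omega⟩
  simp only [Nat.add_sub_cancel]
  set Q := ∏ j ∈ Finset.range (ℓ - 1), f j
  set F := ∏ j ∈ Finset.range ℓ, f j
  set P := pdivX (f (ℓ - 1))
  calc g * P⁻¹ * F ^ (m' + 1)
      = (P * P⁻¹) * (X * g * F ^ m' * Q) := by
        rw [pow_succ, hF]; ring
    _ = X * g * F ^ m' * Q := by rw [hPinv, one_mul]

end Aux

section Aux2
variable {K : Type*} [Field K]

lemma coeff_h_pow_zero (h : PowerSeries K) (h0 : constantCoeff h = 0)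
    {j k : ℕ} (hjk : j < k) : coeff j (h ^ k) = 0 :=
  coeff_zero_of_X_pow_dvd (pow_dvd_pow_of_dvd (PowerSeries.X_dvd_iff.mpr h0) k) hjk

lemma maCol_coeff_zero (ℓ : ℕ) (hℓ : 1 ≤ ℓ) (b g : PowerSeries K) (f : ℕ → PowerSeries K)
    (hf0 : ∀ j < ℓ, constantCoeff (f j) = 0)
    (m n : ℕ) (hm : 1 ≤ m) (hn : n < ℓ * m) :
    coeff n (maCol ℓ b g f (ℓ * m)) = 0 := by
  rw [maCol_mul ℓ hℓ b g f m hm]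
  apply coeff_zero_of_X_pow_dvd (r := ℓ * m) _ hn
  have hF : (X : PowerSeries K) ^ ℓ ∣ ∏ j ∈ Finset.range ℓ, f j := by
    calc (X : PowerSeries K) ^ ℓ = ∏ _j ∈ Finset.range ℓ, (X : PowerSeries K) := by simp
    _ ∣ _ := Finset.prod_dvd_prod_of_dvd _ _ fun j hj =>
        PowerSeries.X_dvd_iff.mpr (hf0 j (Finset.mem_range.mp hj))
  have hQ : (X : PowerSeries K) ^ (ℓ - 1) ∣ ∏ j ∈ Finset.range (ℓ - 1), f j := by
    calc (X : PowerSeries K) ^ (ℓ - 1)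
        = ∏ _j ∈ Finset.range (ℓ - 1), (X : PowerSeries K) := by simp
    _ ∣ _ := Finset.prod_dvd_prod_of_dvd _ _ fun j hj =>
        PowerSeries.X_dvd_iff.mpr (hf0 j (by have := Finset.mem_range.mp hj; omega))
  obtain ⟨m', rfl⟩ : ∃ m', m = m' + 1 := ⟨m - 1, by omega⟩
  have hexp : ℓ * (m' + 1) = 1 + ℓ * m' + (ℓ - 1) := by
    have : ℓ * (m' + 1) = ℓ * m' + ℓ := by ring
    omega
  simp only [Nat.add_sub_cancel]
  rw [hexp, pow_add, pow_add, pow_one]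
  exact mul_dvd_mul (mul_dvd_mul (dvd_mul_right X g)
    ((pow_mul (X : PowerSeries K) ℓ m') ▸ pow_dvd_pow_of_dvd hF m')) hQ

end Aux2

/-- First fundamental theorem of multiple almost-Riordan arrays, case `j = 0`:
for `u ∈ K[[t^ℓ]]`, the action of `(b | g; f₁, …, f_ℓ)` on `u` is
`u₀·b + (tg/f_ℓ)·(u(h) − u₀)`, where `h = (f₁⋯f_ℓ)^{1/ℓ}` and `u₀ = u(0)`. -/
theorem FFT_multiple_almost_riordan_case0 {K : Type*} [Field K] [CharZero K]
    (ℓ : ℕ) (hℓ : 1 ≤ ℓ)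
    (b g : PowerSeries K) (f : ℕ → PowerSeries K) (h : PowerSeries K)
    (hb : InTl ℓ b) (hb0 : constantCoeff b ≠ 0)
    (hg : InTl ℓ g) (hg0 : constantCoeff g ≠ 0)
    (hf : ∀ j < ℓ, IsMult ℓ (f j))
    (hh : IsMult ℓ h) (hroot : h ^ ℓ = ∏ j ∈ Finset.range ℓ, f j)
    (u : PowerSeries K) (hu : InTl ℓ u) :
    (PowerSeries.mk fun n =>
        ∑ k ∈ Finset.range (n + 1), coeff n (maCol ℓ b g f k) * coeff k u) =
      C (constantCoeff u) * b +
        g * (pdivX (f (ℓ - 1)))⁻¹ * (pcomp u h - C (constantCoeff u)) := by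
  set u0 := constantCoeff u with hu0
  ext n
  rw [coeff_mk, map_add, coeff_C_mul]
  set T : PowerSeries K :=
    ∑ m ∈ Finset.Ico 1 (n + 1), C (coeff (ℓ * m) u) * h ^ (ℓ * m) with hT
  have hcS : ∀ j ≤ n, coeff j (pcomp u h - C u0) = coeff j T := by
    intro j hj
    rw [map_sub, coeff_C]
    rw [show coeff j (pcomp u h)
        = ∑ k ∈ Finset.range (j + 1), coeff k u * coeff j (h ^ k) from coeff_mk _ _]
    rw [Finset.range_eq_Ico, Finset.sum_eq_sum_Ico_succ_bot (by omega : 0 < j + 1)]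
    have hbot : coeff 0 u * coeff j ((h : PowerSeries K) ^ 0)
        = if j = 0 then u0 else 0 := by
      rw [pow_zero, coeff_one, coeff_zero_eq_constantCoeff]
      split_ifs <;> simp [hu0]
    rw [hbot, add_sub_cancel_left,
      sum_reindex ℓ hℓ u hu (fun k => coeff j (h ^ k)) j n hj
        (fun m _ hlt => coeff_h_pow_zero h hh.1 hlt),
      hT, map_sum]
    exact Finset.sum_congr rfl fun m _ => by rw [coeff_C_mul]
  have hAS : coeff n (g * (pdivX (f (ℓ - 1)))⁻¹ * (pcomp u h - C u0))
      = coeff n (g * (pdivX (f (ℓ - 1)))⁻¹ * T) := by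
    rw [PowerSeries.coeff_mul, PowerSeries.coeff_mul]
    apply Finset.sum_congr rfl
    intro p hp
    rw [Finset.HasAntidiagonal.mem_antidiagonal] at hp
    rw [hcS p.2 (by omega)]
  have hAT : g * (pdivX (f (ℓ - 1)))⁻¹ * T
      = ∑ m ∈ Finset.Ico 1 (n + 1), C (coeff (ℓ * m) u) * maCol ℓ b g f (ℓ * m) := by
    rw [hT, Finset.mul_sum]
    apply Finset.sum_congr rfl
    intro m hm
    rw [Finset.mem_Ico] at hm
    rw [← key_col ℓ hℓ b g f h hf hroot m hm.1]
    ring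
  rw [hAS, hAT, map_sum]
  rw [Finset.range_eq_Ico, Finset.sum_eq_sum_Ico_succ_bot (by omega : 0 < n + 1)]
  have h0 : coeff n (maCol ℓ b g f 0) * coeff 0 u = u0 * coeff n b := by
    show coeff n b * coeff 0 u = _
    rw [coeff_zero_eq_constantCoeff, ← hu0]; ring
  rw [h0]
  congr 1
  rw [show (∑ k ∈ Finset.Ico 1 (n + 1), coeff n (maCol ℓ b g f k) * coeff k u)
      = ∑ k ∈ Finset.Ico 1 (n + 1), coeff k u * coeff n (maCol ℓ b g f k) from
    Finset.sum_congr rfl fun k _ => mul_comm _ _]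
  rw [sum_reindex ℓ hℓ u hu (fun k => coeff n (maCol ℓ b g f k)) n n le_rfl
    (fun m hm hlt => maCol_coeff_zero ℓ hℓ b g f (fun j hj => (hf j hj).1) m n hm hlt)]
  exact Finset.sum_congr rfl fun m _ => by rw [coeff_C_mul]
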